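/- arXiv:2504.03314 — 2 statements merged into one kernel-verified Lean document; each statement's English description precedes it below -/
import Mathlib

section
/- In three dimensions, if u is the zero-energy scattering solution for a nonnegative, compactly supported, spherically symmetric potential v, written as u(x) = 1 - ω(x) with ω(x) = a/|x| outside the support of v, then 8πa = ∫ v(x)u(x) dx, and consequently 8πa ≤ ∫ v(x) dx whenever 0 ≤ u ≤ 1. -/
open MeasureTheory

/-- Radial formulation of the 3D zero-energy scattering problem:
`u(x) = w(|x|)/|x|`, `w'' = (1/2) v w`, `w(r) = r - a` for `r > R`.
Then `∫_{ℝ³} v u = 4π ∫₀^∞ v(r) w(r) r dr = 8πa`, and since `0 ≤ u ≤ 1`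
(i.e. `0 ≤ w(r) ≤ r`), also `8πa ≤ ∫_{ℝ³} v = 4π ∫₀^∞ v(r) r² dr`. -/
theorem scattering_length_integral_identity
    (v w : ℝ → ℝ) (R a : ℝ) (hR : 0 < R)
    (hv : ∀ r, 0 ≤ v r) (hvsupp : ∀ r, R < r → v r = 0)
    (hw : ContDiff ℝ 2 w) (hw0 : w 0 = 0)
    (hode : ∀ r, 0 < r → deriv (deriv w) r = (1 / 2) * v r * w r)
    (hout : ∀ r, R < r → w r = r - a)
    (hu : ∀ r, 0 < r → 0 ≤ w r ∧ w r ≤ r)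
    (hint : IntegrableOn (fun r => v r * w r * r) (Set.Ioi (0 : ℝ)))
    (hint2 : IntegrableOn (fun r => v r * r ^ 2) (Set.Ioi (0 : ℝ))) :
    4 * Real.pi * ∫ r in Set.Ioi (0 : ℝ), v r * w r * r = 8 * Real.pi * a ∧
    8 * Real.pi * a ≤ 4 * Real.pi * ∫ r in Set.Ioi (0 : ℝ), v r * r ^ 2 := by
  have hw1 : ContDiff ℝ 1 (deriv w) := by
    have := (contDiff_succ_iff_deriv (n := 1)).mp (by exact_mod_cast hw)
    exact this.2.2
  have hdw : Differentiable ℝ w := hw.differentiable two_ne_zero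
  have hddw : Differentiable ℝ (deriv w) := hw1.differentiable one_ne_zero
  have hcont : Continuous (deriv (deriv w)) := hw1.continuous_deriv le_rfl
  set T : ℝ := R + 1 with hT
  have hRT : R < T := by simp [hT]
  have h0T : (0 : ℝ) < T := hR.trans hRT
  -- derivative of w at T is 1
  have hdwT : deriv w T = 1 := by
    have heq : w =ᶠ[nhds T] (fun r => r - a) := by
      filter_upwards [IsOpen.mem_nhds isOpen_Ioi hRT] with r hr
      exact hout r hr
    rw [Filter.EventuallyEq.deriv_eq heq]
    simp [deriv_sub, differentiableAt_id]
  -- vanishing of integrand on Ioi T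
  have hvanish : ∀ r ∈ Set.Ioi T, v r * w r * r = 0 := fun r hr => by
    rw [hvsupp r (hRT.trans hr)]; ring
  -- split integral
  have hsplit : ∫ r in Set.Ioi (0 : ℝ), v r * w r * r
      = ∫ r in Set.Ioc (0 : ℝ) T, v r * w r * r := by
    rw [← Set.Ioc_union_Ioi_eq_Ioi h0T.le,
      setIntegral_union (Set.Ioc_disjoint_Ioi le_rfl) measurableSet_Ioi
        (hint.mono_set (by rw [← Set.Ioc_union_Ioi_eq_Ioi h0T.le]; exact Set.subset_union_left))
        (hint.mono_set (by rw [← Set.Ioc_union_Ioi_eq_Ioi h0T.le]; exact Set.subset_union_right))]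
    rw [setIntegral_eq_zero_of_forall_eq_zero hvanish, add_zero]
  -- rewrite integrand via ODE
  have hcongr : ∫ r in Set.Ioc (0 : ℝ) T, v r * w r * r
      = ∫ r in Set.Ioc (0 : ℝ) T, 2 * (deriv (deriv w) r * r) := by
    apply setIntegral_congr_fun measurableSet_Ioc
    intro r hr
    simp only
    rw [hode r hr.1]; ring
  -- FTC
  have hFTC : ∫ r in (0:ℝ)..T, deriv (deriv w) r * r
      = (deriv w T * T - w T) - (deriv w 0 * 0 - w 0) := by
    apply intervalIntegral.integral_eq_sub_of_hasDerivAt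
      (f := fun r => deriv w r * r - w r)
    · intro r _
      have h1 : HasDerivAt (fun r => deriv w r * r) (deriv (deriv w) r * r + deriv w r * 1) r :=
        (hddw r).hasDerivAt.mul (hasDerivAt_id r)
      have h2 : HasDerivAt w (deriv w r) r := (hdw r).hasDerivAt
      have := h1.sub h2
      convert this using 1
      · rfl
      · ring
    · exact (hcont.mul continuous_id).intervalIntegrable 0 T
  have hwT : w T = T - a := hout T hRT
  have hval : ∫ r in Set.Ioc (0 : ℝ) T, v r * w r * r = 2 * a := by
    rw [hcongr]
    rw [← intervalIntegral.integral_of_le h0T.le] at *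
    rw [intervalIntegral.integral_const_mul, hFTC, hdwT, hwT, hw0]
    ring
  have hmain : ∫ r in Set.Ioi (0 : ℝ), v r * w r * r = 2 * a := by
    rw [hsplit, hval]
  constructor
  · rw [hmain]; ring
  · have hle : ∫ r in Set.Ioi (0 : ℝ), v r * w r * r
        ≤ ∫ r in Set.Ioi (0 : ℝ), v r * r ^ 2 := by
      apply setIntegral_mono_on hint hint2 measurableSet_Ioi
      intro r hr
      have h := hu r hr
      have : v r * w r ≤ v r * r := mul_le_mul_of_nonneg_left h.2 (hv r)
      calc v r * w r * r ≤ v r * r * r :=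
            mul_le_mul_of_nonneg_right this (le_of_lt hr)
        _ = v r * r ^ 2 := by ring
    have := mul_le_mul_of_nonneg_left hle (by positivity : (0:ℝ) ≤ 4 * Real.pi)
    rw [hmain] at this
    linarith
end

section
/- The radial zero-energy scattering problem in three dimensions with a nonnegative compactly supported potential has a unique scattering length: if w'' = (1/2) v w on (0,∞), w(0) = 0, and w(r) = c·(r - a) for r > R with c ≠ 0, then a ≤ R. -/
theorem scattering_length_le_range
    (v w : ℝ → ℝ) (R a c : ℝ) (hR : 0 < R) (hc : 0 < c)
    (hv : ∀ r, 0 < r → 0 ≤ v r) (hvcont : ContinuousOn v (Set.Ioi 0))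
    (hvsupp : ∀ r, R < r → v r = 0)
    (hw : ContDiff ℝ 2 w) (hw0 : w 0 = 0) (hwne : ∃ r, w r ≠ 0)
    (hode : ∀ r, 0 < r → deriv (deriv w) r = (1 / 2) * v r * w r)
    (hout : ∀ r, R < r → w r = c * (r - a)) :
    a ≤ R := by
  by_contra h
  push_neg at h
  -- h : R < a
  set S : Set ℝ := {r | r ∈ Set.Icc 0 R ∧ 0 ≤ w r} with hSdef
  have h0S : (0:ℝ) ∈ S := ⟨⟨le_refl 0, hR.le⟩, by rw [hw0]⟩
  have hne : S.Nonempty := ⟨0, h0S⟩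
  have hbdd : BddAbove S := ⟨R, fun x hx => hx.1.2⟩
  set s := sSup S with hs
  have hs0 : 0 ≤ s := le_csSup hbdd h0S
  have hsR : s ≤ R := csSup_le hne fun x hx => hx.1.2
  have hws : 0 ≤ w s := by
    have hmem : s ∈ closure S := csSup_mem_closure hne hbdd
    have hcl : IsClosed {r : ℝ | 0 ≤ w r} := isClosed_le continuous_const hw.continuous
    have hsub : closure S ⊆ {r : ℝ | 0 ≤ w r} :=
      hcl.closure_subset_iff.2 (fun x hx => hx.2)
    exact hsub hmem
  have hneg : ∀ r, s < r → r ≤ R → w r < 0 := by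
    intro r hr hrR
    by_contra hcon
    push_neg at hcon
    exact absurd (le_csSup hbdd ⟨⟨le_trans hs0 hr.le, hrR⟩, hcon⟩) (not_le.2 hr)
  have hdw : ContDiff ℝ 1 (deriv w) := by
    have := (contDiff_succ_iff_deriv (n := 1)).1 (by exact_mod_cast hw)
    exact this.2.2
  have hconc : ConcaveOn ℝ (Set.Icc s (a+1)) w := by
    apply concaveOn_of_deriv2_nonpos (convex_Icc _ _) hw.continuous.continuousOn
    · exact (hw.differentiable (by norm_num)).differentiableOn
    · exact (hdw.differentiable (by norm_num)).differentiableOn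
    · intro x hx
      rw [interior_Icc] at hx
      have hx0 : 0 < x := lt_of_le_of_lt hs0 hx.1
      have h2 : deriv^[2] w x = deriv (deriv w) x := rfl
      rw [h2, hode x hx0]
      rcases le_or_gt x R with hxR | hxR
      · have hwx := hneg x hx.1 hxR
        nlinarith [hv x hx0]
      · rw [hvsupp x hxR]; simp
  -- pick r1 = (R+a)/2 in (s, a), r2 = a+1
  set r1 : ℝ := (R + a) / 2 with hr1
  have hsr1 : s < r1 := by rw [hr1]; linarith
  have hr1a : r1 < a := by rw [hr1]; linarith
  have hr1R : R < r1 := by rw [hr1]; linarith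
  have hwa1 : w (a + 1) = c := by rw [hout (a+1) (by linarith)]; ring
  have hwr1 : w r1 = c * (r1 - a) := hout r1 hr1R
  have hwr1neg : w r1 < 0 := by rw [hwr1]; nlinarith
  -- concavity inequality
  have hden : (0:ℝ) < (a + 1) - s := by linarith
  set α : ℝ := ((a + 1) - r1) / ((a + 1) - s) with hα
  set β : ℝ := (r1 - s) / ((a + 1) - s) with hβ
  have hαpos : 0 < α := div_pos (by linarith) hden
  have hβpos : 0 < β := div_pos (by linarith) hden
  have hαβ : α + β = 1 := by rw [hα, hβ, ← add_div]; field_simp; ring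
  have hcomb : α • s + β • (a + 1) = r1 := by
    simp only [smul_eq_mul, hα, hβ]
    field_simp
    ring
  have hineq := hconc.2 (Set.mem_Icc.2 ⟨le_refl s, by linarith⟩)
    (Set.mem_Icc.2 ⟨by linarith, le_refl _⟩) hαpos.le hβpos.le hαβ
  rw [hcomb] at hineq
  simp only [smul_eq_mul] at hineq
  nlinarith [mul_nonneg hαpos.le hws, mul_pos hβpos hc]
end
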